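/- Let f ∈ C¹(ℝ^n), x ≠ y, and for t ∈ [0,1) set B_{t,x} = B(x, (1−t)|x−y|). Then ∫₀¹ (1/|A|)(1/(1−t)) ∫_{B_{t,x}} |Df(w)| dw dt ≤ (2^n/n) MDf(x), where A = B((x+y)/2, |x−y|/2) and MDf is the maximal function of |Df|. -/
import Mathlib
open MeasureTheory ENNReal

/-- Hardy–Littlewood maximal function (of `‖g‖`). -/
noncomputable def maxFn {n : ℕ} {F : Type*} [NormedAddCommGroup F]
    (g : EuclideanSpace ℝ (Fin n) → F) (x : EuclideanSpace ℝ (Fin n)) : ℝ≥0∞ :=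
  ⨆ r ∈ Set.Ioi (0 : ℝ),
    (∫⁻ z in Metric.ball x r, ‖g z‖₊ ∂volume) / volume (Metric.ball x r)

/-- the shrinking-ball averages of `|Df|` integrate up to `(2^n/n) MDf(x)`. -/
theorem shrinking_ball_maximal_bound (n : ℕ) (hn : 0 < n)
    (f : EuclideanSpace ℝ (Fin n) → ℝ) (hf : ContDiff ℝ 1 f)
    (x y : EuclideanSpace ℝ (Fin n)) (hxy : x ≠ y) :
    (∫⁻ t in Set.Ioo (0:ℝ) 1,
        (∫⁻ w in Metric.ball x ((1 - t) * ‖x - y‖), ‖fderiv ℝ f w‖₊ ∂volume) /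
          (volume (Metric.ball ((1 / 2 : ℝ) • (x + y)) (‖x - y‖ / 2)) *
            ENNReal.ofReal (1 - t))) ≤
      ((2 : ℝ≥0∞) ^ n / n) * maxFn (fun w => fderiv ℝ f w) x := by
  obtain ⟨m, rfl⟩ : ∃ m, n = m + 1 := ⟨n - 1, (Nat.succ_pred_eq_of_pos hn).symm⟩
  set M := maxFn (fun w => fderiv ℝ f w) x with hM
  have hd : (0:ℝ) < ‖x - y‖ := by rwa [norm_pos_iff, sub_ne_zero]
  set c := volume (Metric.ball (0 : EuclideanSpace ℝ (Fin (m+1))) 1) with hc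
  have hc0 : c ≠ 0 := (Metric.measure_ball_pos volume 0 one_pos).ne'
  have hctop : c ≠ ⊤ := measure_ball_lt_top.ne
  have hballvol : ∀ (z : EuclideanSpace ℝ (Fin (m+1))) (r : ℝ), 0 ≤ r →
      volume (Metric.ball z r) = ENNReal.ofReal (r ^ (m+1)) * c := by
    intro z r hr
    rw [Measure.addHaar_ball volume z hr, finrank_euclideanSpace_fin]
  -- pointwise bound
  have key : ∀ t ∈ Set.Ioo (0:ℝ) 1,
      (∫⁻ w in Metric.ball x ((1 - t) * ‖x - y‖), ‖fderiv ℝ f w‖₊ ∂volume) /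
        (volume (Metric.ball ((1 / 2 : ℝ) • (x + y)) (‖x - y‖ / 2)) *
          ENNReal.ofReal (1 - t))
      ≤ M * ENNReal.ofReal (2^(m+1) * (1-t)^m) := by
    intro t ht
    have h1t : (0:ℝ) < 1 - t := by linarith [ht.2]
    set r := (1 - t) * ‖x - y‖ with hr
    have hrpos : 0 < r := mul_pos h1t hd
    set I := ∫⁻ w in Metric.ball x r, ‖fderiv ℝ f w‖₊ ∂volume with hI
    have hIM : I / volume (Metric.ball x r) ≤ M := by
      rw [hM, maxFn]
      exact le_iSup₂ (f := fun r (_ : r ∈ Set.Ioi (0:ℝ)) =>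
        (∫⁻ z in Metric.ball x r, ‖fderiv ℝ f z‖₊ ∂volume) / volume (Metric.ball x r)) r hrpos
    have hvol0 : volume (Metric.ball x r) ≠ 0 := (Metric.measure_ball_pos volume x hrpos).ne'
    have hvoltop : volume (Metric.ball x r) ≠ ⊤ := measure_ball_lt_top.ne
    have hIle : I ≤ M * volume (Metric.ball x r) :=
      (ENNReal.div_le_iff hvol0 hvoltop).mp hIM
    have hden : volume (Metric.ball ((1 / 2 : ℝ) • (x + y)) (‖x - y‖ / 2)) *
        ENNReal.ofReal (1 - t) = ENNReal.ofReal ((‖x - y‖/2) ^ (m+1) * (1 - t)) * c := by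
      rw [hballvol _ _ (by positivity), ENNReal.ofReal_mul (by positivity)]
      ring
    have hnum : volume (Metric.ball x r) = ENNReal.ofReal (r ^ (m+1)) * c :=
      hballvol _ _ hrpos.le
    calc I / (volume (Metric.ball ((1 / 2 : ℝ) • (x + y)) (‖x - y‖ / 2)) *
          ENNReal.ofReal (1 - t))
        ≤ M * volume (Metric.ball x r) / (volume (Metric.ball ((1 / 2 : ℝ) • (x + y)) (‖x - y‖ / 2)) * ENNReal.ofReal (1 - t)) :=
          ENNReal.div_le_div_right hIle _
      _ = M * (ENNReal.ofReal (r ^ (m+1)) * c / (ENNReal.ofReal ((‖x - y‖/2) ^ (m+1) * (1 - t)) * c)) := by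
          rw [hden, hnum, mul_div_assoc]
      _ = M * ENNReal.ofReal (2^(m+1) * (1-t)^m) := by
          rw [ENNReal.mul_div_mul_right _ _ hc0 hctop,
            ← ENNReal.ofReal_div_of_pos (by positivity)]
          congr 2
          rw [hr, mul_pow, div_pow]
          field_simp
          ring
  have meas : Measurable fun t : ℝ => ENNReal.ofReal (2^(m+1) * (1-t)^m) :=
    (continuous_const.mul ((continuous_const.sub continuous_id).pow m)).measurable.ennreal_ofReal
  calc (∫⁻ t in Set.Ioo (0:ℝ) 1,
        (∫⁻ w in Metric.ball x ((1 - t) * ‖x - y‖), ‖fderiv ℝ f w‖₊ ∂volume) /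
          (volume (Metric.ball ((1 / 2 : ℝ) • (x + y)) (‖x - y‖ / 2)) *
            ENNReal.ofReal (1 - t)))
      ≤ ∫⁻ t in Set.Ioo (0:ℝ) 1, M * ENNReal.ofReal (2^(m+1) * (1-t)^m) :=
        setLIntegral_mono (meas.const_mul M) key
    _ = M * ∫⁻ t in Set.Ioo (0:ℝ) 1, ENNReal.ofReal (2^(m+1) * (1-t)^m) :=
        lintegral_const_mul _ meas
    _ = M * ((2:ℝ≥0∞)^(m+1) / ((m+1 : ℕ) : ℝ≥0∞)) := by
        congr 1
        have hint : IntegrableOn (fun t : ℝ => 2^(m+1) * (1-t)^m) (Set.Ioo 0 1) volume :=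
          (Continuous.integrableOn_Icc (continuous_const.mul ((continuous_const.sub continuous_id).pow m)) (a := (0:ℝ)) (b := 1)).mono_set
            Set.Ioo_subset_Icc_self
        have hreal : ∫ t in Set.Ioo (0:ℝ) 1, 2^(m+1) * (1-t)^m = 2^(m+1) / ((m:ℝ)+1) := by
          rw [← integral_Ioc_eq_integral_Ioo,
            ← intervalIntegral.integral_of_le (zero_le_one (α := ℝ)),
            intervalIntegral.integral_const_mul,
            show (fun t : ℝ => (1-t)^m) = fun t => (fun u : ℝ => u^m) (1 - t) from rfl,
            intervalIntegral.integral_comp_sub_left (fun u : ℝ => u^m) 1]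
          simp [integral_pow]
          ring
        rw [← ofReal_integral_eq_lintegral_ofReal hint
          ((ae_restrict_mem measurableSet_Ioo).mono fun t ht => by
            have : (0:ℝ) < 1 - t := by linarith [ht.2]
            positivity), hreal,
          ENNReal.ofReal_div_of_pos (by positivity)]
        congr 1
        · rw [ENNReal.ofReal_pow (by norm_num)]
          norm_num
        · push_cast
          rw [ENNReal.ofReal_add (Nat.cast_nonneg m) zero_le_one,
            ENNReal.ofReal_natCast, ENNReal.ofReal_one]
    _ = (2:ℝ≥0∞)^(m+1) / ((m+1 : ℕ) : ℝ≥0∞) * M := mul_comm _ _
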